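/- arXiv:q-alg/9612014 — 2 statements merged into one kernel-verified Lean document; each statement's English description precedes it below -/
import Mathlib

section
/- (q-binomial theorem) For 0 < q < 1, |z| < 1, and a ∈ ℂ, Σ_{k=0}^∞ ((a;q)_k / (q;q)_k) z^k = (az;q)_∞ / (z;q)_∞. -/
/-- The finite q-Pochhammer symbol `(a;q)_k = ∏_{l=0}^{k-1} (1 - a q^l)`. -/
noncomputable def qPoch (q a : ℂ) (k : ℕ) : ℂ := ∏ l ∈ Finset.range k, (1 - a * q ^ l)

/-- The infinite q-Pochhammer symbol `(a;q)_∞ = ∏_{l≥0} (1 - a q^l)`. -/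
noncomputable def qPochInf (q a : ℂ) : ℂ := ∏' l : ℕ, (1 - a * q ^ l)

open Filter Finset Topology

lemma qPoch_succ (q a : ℂ) (k : ℕ) :
    qPoch q a (k + 1) = qPoch q a k * (1 - a * q ^ k) := Finset.prod_range_succ _ _

lemma qPoch_zero (q a : ℂ) : qPoch q a 0 = 1 := Finset.prod_range_zero _

/-- ∏ (1 - x i) ≥ 1 - ∑ x i for 0 ≤ x i ≤ 1. -/
lemma one_sub_sum_le_prod_one_sub' (x : ℕ → ℝ) (h0 : ∀ i, 0 ≤ x i) (h1 : ∀ i, x i ≤ 1)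
    (n : ℕ) : 1 - ∑ i ∈ Finset.range n, x i ≤ ∏ i ∈ Finset.range n, (1 - x i) := by
  induction n with
  | zero => simp
  | succ n ih =>
    rw [Finset.prod_range_succ, Finset.sum_range_succ]
    have hp : (0:ℝ) ≤ ∏ i ∈ Finset.range n, (1 - x i) :=
      Finset.prod_nonneg fun i _ => by linarith [h1 i]
    have hs : (0:ℝ) ≤ ∑ i ∈ Finset.range n, x i :=
      Finset.sum_nonneg fun i _ => h0 i
    nlinarith [h0 n, h1 n]

section q
variable {q : ℝ} (hq0 : 0 < q) (hq1 : q < 1)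

include hq0 in
lemma norm_q_pow (l : ℕ) : ‖((q:ℂ)) ^ l‖ = q ^ l := by
  rw [norm_pow, Complex.norm_real, Real.norm_of_nonneg hq0.le]

include hq0 hq1 in
/-- summability of logs of the factors -/
lemma summable_log_qfac (w : ℂ) :
    Summable (fun l : ℕ => Complex.log (1 - w * (q:ℂ) ^ l)) := by
  have hgeo : Summable (fun l : ℕ => (3/2) * (‖w‖ * q ^ l)) := by
    exact ((summable_geometric_of_lt_one hq0.le hq1).mul_left _).mul_left _
  apply Summable.of_norm_bounded_eventually_nat hgeo
  have hq : Tendsto (fun l : ℕ => ‖w‖ * q ^ l) atTop (𝓝 0) := by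
    simpa using (tendsto_pow_atTop_nhds_zero_of_lt_one hq0.le hq1).const_mul ‖w‖
  filter_upwards [hq.eventually_le_const (by norm_num : (0:ℝ) < 1/2)] with l hl
  have hnorm : ‖-(w * (q:ℂ) ^ l)‖ ≤ 1/2 := by
    rw [norm_neg, norm_mul, norm_q_pow hq0]; exact hl
  have := Complex.norm_log_one_add_half_le_self hnorm
  rw [show (1 : ℂ) + -(w * (q:ℂ)^l) = 1 - w * (q:ℂ)^l by ring] at this
  apply this.trans
  rw [norm_neg, norm_mul, norm_q_pow hq0]

include hq0 hq1 in
lemma hasProd_qPochInf (w : ℂ) :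
    HasProd (fun l : ℕ => 1 - w * (q:ℂ) ^ l) (qPochInf q w) := by
  by_cases hne : ∀ l : ℕ, 1 - w * (q:ℂ) ^ l ≠ 0
  · exact (Complex.hasProd_of_hasSum_log (f := fun l : ℕ => 1 - w * (q:ℂ) ^ l)
      (fun l => hne l) (summable_log_qfac hq0 hq1 w).hasSum).multipliable.hasProd
  · push_neg at hne
    obtain ⟨j, hj⟩ := hne
    have h0 : HasProd (fun l : ℕ => 1 - w * (q:ℂ) ^ l) 0 := by
      unfold HasProd
      have : (fun s : Finset ℕ => ∏ i ∈ s, (1 - w * (q:ℂ) ^ i)) =ᶠ[atTop] fun _ => 0 := by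
        filter_upwards [eventually_ge_atTop {j}] with s hs
        exact Finset.prod_eq_zero (hs (Finset.mem_singleton_self j)) hj
      exact Tendsto.congr' this.symm tendsto_const_nhds
    rw [qPochInf, h0.tprod_eq]
    exact h0

include hq0 hq1 in
lemma tendsto_qPoch (w : ℂ) :
    Tendsto (fun n => qPoch q w n) atTop (𝓝 (qPochInf q w)) :=
  (hasProd_qPochInf hq0 hq1 w).tendsto_prod_nat

include hq0 hq1 in
lemma qPochInf_ne_zero (w : ℂ) (hw : ‖w‖ < 1) : qPochInf q w ≠ 0 := by
  have hne : ∀ l : ℕ, 1 - w * (q:ℂ) ^ l ≠ 0 := by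
    intro l h
    have h1 : w * (q:ℂ) ^ l = 1 := by linear_combination -h
    have : ‖w * (q:ℂ) ^ l‖ < 1 := by
      rw [norm_mul, norm_q_pow hq0]
      calc ‖w‖ * q ^ l ≤ ‖w‖ * 1 := by
            exact mul_le_mul_of_nonneg_left (pow_le_one₀ hq0.le hq1.le) (norm_nonneg w)
        _ < 1 := by simpa using hw
    rw [h1, norm_one] at this; exact lt_irrefl _ this
  have := Complex.cexp_tsum_eq_tprod (f := fun l : ℕ => 1 - w * (q:ℂ) ^ l)
    (fun l => hne l) (summable_log_qfac hq0 hq1 w)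
  rw [qPochInf, ← this]
  exact Complex.exp_ne_zero _

end q

section q2
variable {q : ℝ} (hq0 : 0 < q) (hq1 : q < 1)

include hq0 hq1 in
lemma qfac_pos (l : ℕ) : 0 < 1 - q ^ (l+1) := by
  have : q ^ (l+1) < 1 := pow_lt_one₀ hq0.le hq1 (Nat.succ_ne_zero l)
  linarith

omit hq1 in
omit hq0 in
lemma qPoch_q_real (k : ℕ) :
    qPoch (q:ℂ) (q:ℂ) k = ((∏ l ∈ Finset.range k, (1 - q ^ (l+1)) : ℝ) : ℂ) := by
  rw [qPoch]
  push_cast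
  refine Finset.prod_congr rfl fun l _ => ?_
  rw [pow_succ']

include hq0 hq1 in
lemma exists_qPoch_q_lower :
    ∃ C : ℝ, 0 < C ∧ ∀ k, C ≤ ∏ l ∈ Finset.range k, (1 - q ^ (l+1)) := by
  obtain ⟨N, hN⟩ := ((tendsto_pow_atTop_nhds_zero_of_lt_one hq0.le hq1).eventually_le_const
    (by linarith : (0:ℝ) < (1 - q)/2)).exists_forall_of_atTop
  set D : ℕ → ℝ := fun k => ∏ l ∈ Finset.range k, (1 - q ^ (l+1)) with hD
  have hDpos : ∀ k, 0 < D k := fun k => Finset.prod_pos fun l _ => qfac_pos hq0 hq1 l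
  have hqN : q ^ N ≤ (1 - q)/2 := hN N le_rfl
  refine ⟨D N * (1/2), by have := hDpos N; positivity, fun k => ?_⟩
  rcases le_total k N with hk | hk
  · obtain ⟨m, rfl⟩ := Nat.exists_eq_add_of_le hk
    have h1 : D (k + m) ≤ D k := by
      rw [hD]; simp only
      rw [Finset.prod_range_add]
      have ht : ∏ l ∈ Finset.range m, (1 - q^(k+l+1)) ≤ 1 :=
        Finset.prod_le_one (fun l _ => (qfac_pos hq0 hq1 (k+l)).le)
          (fun l _ => by nlinarith [pow_pos hq0 (k+l+1)])
      calc (∏ l ∈ Finset.range k, (1 - q^(l+1))) * ∏ l ∈ Finset.range m, (1 - q^(k+l+1))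
          ≤ (∏ l ∈ Finset.range k, (1 - q^(l+1))) * 1 :=
            mul_le_mul_of_nonneg_left ht (hDpos k).le
        _ = D k := mul_one _
    nlinarith [hDpos k, hDpos (k+m)]
  · obtain ⟨m, rfl⟩ := Nat.exists_eq_add_of_le hk
    have hsum : ∑ l ∈ Finset.range m, q^(N+l+1) ≤ 1/2 := by
      have h1 : ∀ l, q^(N+l+1) = q^N * q^(l+1) := fun l => by ring
      have h2 : ∑ l ∈ Finset.range m, q^(l+1) ≤ q / (1-q) := by
        have h3 : ∑ l ∈ Finset.range m, q^(l+1) = q * ∑ l ∈ Finset.range m, q^l := by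
          rw [Finset.mul_sum]; exact Finset.sum_congr rfl fun l _ => by ring
        have h4 : ∑ l ∈ Finset.range m, q^l = (q^m - 1)/(q - 1) := geom_sum_eq hq1.ne m
        rw [h3, h4]
        have h5 : (q^m - 1)/(q - 1) = (1 - q^m)/(1 - q) := by
          rw [div_eq_div_iff (by linarith) (by linarith)]; ring
        rw [h5]
        have h6 : (1 - q^m)/(1-q) ≤ 1/(1-q) := by
          apply div_le_div_of_nonneg_right _ (by linarith)
          · nlinarith [pow_pos hq0 m]
        calc q * ((1 - q^m)/(1-q)) ≤ q * (1/(1-q)) :=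
              mul_le_mul_of_nonneg_left h6 hq0.le
          _ = q/(1-q) := by ring
      calc ∑ l ∈ Finset.range m, q^(N+l+1)
          = q^N * ∑ l ∈ Finset.range m, q^(l+1) := by
            rw [Finset.mul_sum]; exact Finset.sum_congr rfl fun l _ => h1 l
        _ ≤ ((1-q)/2) * (q/(1-q)) := by
            apply mul_le_mul hqN h2 (Finset.sum_nonneg fun l _ => (pow_pos hq0 _).le)
              (by linarith)
        _ = q/2 := by rw [div_mul_div_comm]; rw [div_eq_div_iff (by linarith) (by norm_num)]; ring
        _ ≤ 1/2 := by linarith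
    have htail : (1:ℝ)/2 ≤ ∏ l ∈ Finset.range m, (1 - q^(N+l+1)) := by
      have := one_sub_sum_le_prod_one_sub' (fun l => q^(N+l+1))
        (fun l => (pow_pos hq0 _).le)
        (fun l => (pow_lt_one₀ hq0.le hq1 (Nat.succ_ne_zero _)).le) m
      linarith
    have hsplit : D (N + m) = D N * ∏ l ∈ Finset.range m, (1 - q^(N+l+1)) := by
      rw [hD]; simp only
      rw [Finset.prod_range_add]
    rw [show (∏ l ∈ Finset.range (N+m), (1 - q^(l+1))) = D (N+m) from rfl, hsplit]
    exact mul_le_mul_of_nonneg_left htail (hDpos N).le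

end q2

section q3
variable {q : ℝ} (hq0 : 0 < q) (hq1 : q < 1)

include hq0 hq1 in
lemma qPoch_norm_le (a : ℂ) (k : ℕ) :
    ‖qPoch (q:ℂ) a k‖ ≤ Real.exp (‖a‖ / (1 - q)) := by
  rw [qPoch, norm_prod]
  have h1 : ∀ l ∈ Finset.range k, ‖1 - a * (q:ℂ)^l‖ ≤ Real.exp (‖a‖ * q^l) := by
    intro l _
    calc ‖1 - a * (q:ℂ)^l‖ ≤ ‖(1:ℂ)‖ + ‖a * (q:ℂ)^l‖ := norm_sub_le _ _
      _ = ‖a‖ * q^l + 1 := by rw [norm_one, norm_mul, norm_q_pow hq0]; ring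
      _ ≤ Real.exp (‖a‖ * q^l) := Real.add_one_le_exp _
  calc ∏ l ∈ Finset.range k, ‖1 - a * (q:ℂ)^l‖
      ≤ ∏ l ∈ Finset.range k, Real.exp (‖a‖ * q^l) :=
        Finset.prod_le_prod (fun l _ => norm_nonneg _) h1
    _ = Real.exp (∑ l ∈ Finset.range k, ‖a‖ * q^l) := (Real.exp_sum _ _).symm
    _ ≤ Real.exp (‖a‖ / (1 - q)) := by
        apply Real.exp_le_exp.mpr
        rw [← Finset.mul_sum]
        have hs : ∑ l ∈ Finset.range k, q^l ≤ 1/(1-q) := by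
          rw [geom_sum_eq hq1.ne, show (q^k - 1)/(q-1) = (1 - q^k)/(1-q) by
            rw [div_eq_div_iff (by linarith) (by linarith)]; ring]
          apply div_le_div_of_nonneg_right _ (by linarith)
          nlinarith [pow_pos hq0 k]
        calc ‖a‖ * ∑ l ∈ Finset.range k, q^l ≤ ‖a‖ * (1/(1-q)) :=
              mul_le_mul_of_nonneg_left hs (norm_nonneg a)
          _ = ‖a‖/(1-q) := by ring

include hq0 hq1 in
lemma exists_c_bound (a : ℂ) :
    ∃ M : ℝ, 0 < M ∧ ∀ k, ‖qPoch (q:ℂ) a k / qPoch (q:ℂ) (q:ℂ) k‖ ≤ M := by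
  obtain ⟨C, hC0, hC⟩ := exists_qPoch_q_lower hq0 hq1
  refine ⟨Real.exp (‖a‖ / (1 - q)) / C, by positivity, fun k => ?_⟩
  have hDpos : 0 < ∏ l ∈ Finset.range k, (1 - q ^ (l+1)) :=
    Finset.prod_pos fun l _ => qfac_pos hq0 hq1 l
  rw [norm_div, qPoch_q_real, Complex.norm_real, Real.norm_of_nonneg hDpos.le]
  apply div_le_div₀ (Real.exp_pos _).le (qPoch_norm_le hq0 hq1 a k) hC0 (hC k)

end q3

noncomputable def qbF (q a w : ℂ) : ℂ := ∑' k : ℕ, qPoch q a k / qPoch q (q:ℂ) k * w ^ k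

section q4
variable {q : ℝ} (hq0 : 0 < q) (hq1 : q < 1) (a : ℂ)

include hq0 hq1 in
lemma qPoch_q_ne_zero (k : ℕ) : qPoch (q:ℂ) (q:ℂ) k ≠ 0 := by
  rw [qPoch_q_real]
  have : 0 < ∏ l ∈ Finset.range k, (1 - q ^ (l+1)) :=
    Finset.prod_pos fun l _ => qfac_pos hq0 hq1 l
  exact_mod_cast this.ne'

include hq0 hq1 in
lemma c_rec (k : ℕ) :
    qPoch (q:ℂ) a (k+1) / qPoch (q:ℂ) (q:ℂ) (k+1) * (1 - (q:ℂ)^(k+1))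
      = qPoch (q:ℂ) a k / qPoch (q:ℂ) (q:ℂ) k * (1 - a * (q:ℂ)^k) := by
  have h1 : qPoch (q:ℂ) (q:ℂ) (k+1) = qPoch (q:ℂ) (q:ℂ) k * (1 - (q:ℂ)^(k+1)) := by
    rw [qPoch_succ, ← pow_succ']
  have h2 := qPoch_succ (q:ℂ) a k
  have h3 := qPoch_q_ne_zero hq0 hq1 k
  have h4 := qPoch_q_ne_zero hq0 hq1 (k+1)
  have h5 : (1 - (q:ℂ)^(k+1)) ≠ 0 := by
    intro h
    apply h4
    rw [h1, h, mul_zero]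
  rw [h1, h2]
  field_simp

include hq0 hq1 in
lemma summable_qb (w : ℂ) (hw : ‖w‖ < 1) :
    Summable (fun k : ℕ => qPoch (q:ℂ) a k / qPoch (q:ℂ) (q:ℂ) k * w ^ k) := by
  obtain ⟨M, hM0, hM⟩ := exists_c_bound hq0 hq1 a
  apply Summable.of_norm_bounded
    (((summable_geometric_of_lt_one (norm_nonneg w) hw)).mul_left M)
  intro k
  rw [norm_mul, norm_pow]
  exact mul_le_mul_of_nonneg_right (hM k) (pow_nonneg (norm_nonneg w) k)

include hq0 hq1 in
lemma qbF_feq (w : ℂ) (hw : ‖w‖ < 1) :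
    (1 - w) * qbF (q:ℂ) a w = (1 - a * w) * qbF (q:ℂ) a ((q:ℂ) * w) := by
  set c : ℕ → ℂ := fun k => qPoch (q:ℂ) a k / qPoch (q:ℂ) (q:ℂ) k with hc
  have hqw : ‖(q:ℂ) * w‖ < 1 := by
    rw [norm_mul, Complex.norm_real, Real.norm_of_nonneg hq0.le]
    nlinarith [norm_nonneg w]
  have S1 : Summable (fun k : ℕ => c k * w ^ k) := summable_qb hq0 hq1 a w hw
  have S2 : Summable (fun k : ℕ => c k * ((q:ℂ) * w) ^ k) := summable_qb hq0 hq1 a _ hqw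
  have S2a : Summable (fun k : ℕ => a * (c k * ((q:ℂ) * w) ^ k)) := S2.mul_left a
  set G : ℕ → ℂ := fun k => c k * w ^ k - c k * ((q:ℂ) * w) ^ k with hG
  have SG : Summable G := S1.sub S2
  have hshift : ∀ k, G (k+1) = (c k * w ^ k - a * (c k * ((q:ℂ) * w) ^ k)) * w := by
    intro k
    have hrec := c_rec hq0 hq1 a k
    rw [hG]
    simp only [hc] at hrec ⊢
    linear_combination w^(k+1) * hrec
  have h1 : ∑' k, G k = qbF (q:ℂ) a w - qbF (q:ℂ) a ((q:ℂ) * w) := S1.tsum_sub S2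
  have h2 : ∑' k, G k = (qbF (q:ℂ) a w - a * qbF (q:ℂ) a ((q:ℂ) * w)) * w := by
    rw [SG.tsum_eq_zero_add]
    have hG0 : G 0 = 0 := by simp [hG]
    rw [hG0, zero_add]
    calc ∑' k, G (k+1) = ∑' k, (c k * w ^ k - a * (c k * ((q:ℂ) * w) ^ k)) * w := by
          exact tsum_congr hshift
      _ = (∑' k, (c k * w ^ k - a * (c k * ((q:ℂ) * w) ^ k))) * w := tsum_mul_right
      _ = (qbF (q:ℂ) a w - a * qbF (q:ℂ) a ((q:ℂ) * w)) * w := by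
          rw [S1.tsum_sub S2a, tsum_mul_left]
          rfl
  have key : qbF (q:ℂ) a w - qbF (q:ℂ) a ((q:ℂ) * w)
      = (qbF (q:ℂ) a w - a * qbF (q:ℂ) a ((q:ℂ) * w)) * w := by rw [← h1, ← h2]
  linear_combination key

end q4

section q5
variable {q : ℝ} (hq0 : 0 < q) (hq1 : q < 1) (a : ℂ)

include hq0 hq1 in
lemma qbF_iter (z : ℂ) (hz : ‖z‖ < 1) (n : ℕ) :
    qPoch (q:ℂ) z n * qbF (q:ℂ) a z
      = qPoch (q:ℂ) (a * z) n * qbF (q:ℂ) a ((q:ℂ)^n * z) := by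
  induction n with
  | zero => simp [qPoch_zero]
  | succ n ih =>
    have hwn : ‖(q:ℂ)^n * z‖ < 1 := by
      rw [norm_mul, norm_q_pow hq0]
      calc q^n * ‖z‖ ≤ 1 * ‖z‖ := by
            apply mul_le_mul_of_nonneg_right (pow_le_one₀ hq0.le hq1.le) (norm_nonneg z)
        _ = ‖z‖ := one_mul _
        _ < 1 := hz
    have hfe := qbF_feq hq0 hq1 a ((q:ℂ)^n * z) hwn
    rw [qPoch_succ, qPoch_succ]
    have e1 : (q:ℂ) * ((q:ℂ)^n * z) = (q:ℂ)^(n+1) * z := by ring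
    rw [e1] at hfe
    calc qPoch (q:ℂ) z n * (1 - z * (q:ℂ)^n) * qbF (q:ℂ) a z
        = (1 - z * (q:ℂ)^n) * (qPoch (q:ℂ) z n * qbF (q:ℂ) a z) := by ring
      _ = (1 - z * (q:ℂ)^n) * (qPoch (q:ℂ) (a*z) n * qbF (q:ℂ) a ((q:ℂ)^n * z)) := by
          rw [ih]
      _ = qPoch (q:ℂ) (a*z) n * ((1 - (q:ℂ)^n * z) * qbF (q:ℂ) a ((q:ℂ)^n * z)) := by
          ring
      _ = qPoch (q:ℂ) (a*z) n * ((1 - a * ((q:ℂ)^n * z)) * qbF (q:ℂ) a ((q:ℂ)^(n+1) * z)) := by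
          rw [hfe]
      _ = qPoch (q:ℂ) (a*z) n * (1 - a * z * (q:ℂ)^n) * qbF (q:ℂ) a ((q:ℂ)^(n+1) * z) := by
          ring

include hq0 hq1 in
lemma qbF_sub_one (M : ℝ) (hM : ∀ k, ‖qPoch (q:ℂ) a k / qPoch (q:ℂ) (q:ℂ) k‖ ≤ M)
    (w : ℂ) (hw : ‖w‖ < 1) :
    ‖qbF (q:ℂ) a w - 1‖ ≤ M * ‖w‖ * (1 - ‖w‖)⁻¹ := by
  set c : ℕ → ℂ := fun k => qPoch (q:ℂ) a k / qPoch (q:ℂ) (q:ℂ) k with hc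
  have S1 : Summable (fun k : ℕ => c k * w ^ k) := summable_qb hq0 hq1 a w hw
  have hc0 : c 0 = 1 := by simp [hc, qPoch_zero]
  have h1 : qbF (q:ℂ) a w - 1 = ∑' k, c (k+1) * w ^ (k+1) := by
    have := S1.tsum_eq_zero_add
    rw [qbF]
    simp only [hc0, pow_zero, mul_one] at this
    rw [show (∑' k : ℕ, qPoch (q:ℂ) a k / qPoch (q:ℂ) (q:ℂ) k * w ^ k)
      = ∑' k : ℕ, c k * w ^ k from rfl, this]
    ring
  rw [h1]
  have hgs : HasSum (fun k : ℕ => M * ‖w‖ * ‖w‖ ^ k) (M * ‖w‖ * (1 - ‖w‖)⁻¹) :=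
    (hasSum_geometric_of_lt_one (norm_nonneg w) hw).mul_left _
  apply tsum_of_norm_bounded hgs
  intro k
  rw [norm_mul, norm_pow]
  calc ‖c (k+1)‖ * ‖w‖ ^ (k+1)
      ≤ M * ‖w‖ ^ (k+1) :=
        mul_le_mul_of_nonneg_right (hM (k+1)) (pow_nonneg (norm_nonneg w) _)
    _ = M * ‖w‖ * ‖w‖ ^ k := by ring

end q5

/-- q-binomial theorem: for `0 < q < 1` and `|z| < 1`,
`Σ_k ((a;q)_k / (q;q)_k) z^k = (az;q)_∞ / (z;q)_∞`. -/
theorem q_binomial_theorem (q : ℝ) (hq0 : 0 < q) (hq1 : q < 1)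
    (a z : ℂ) (hz : ‖z‖ < 1) :
    ∑' k : ℕ, qPoch q a k / qPoch q (q : ℂ) k * z ^ k
      = qPochInf q (a * z) / qPochInf q z := by
  have hzne : qPochInf q z ≠ 0 := qPochInf_ne_zero hq0 hq1 z hz
  obtain ⟨M, hM0, hM⟩ := exists_c_bound hq0 hq1 a
  have hq0' : (0:ℝ) ≤ q := hq0.le
  have hzn : ∀ n : ℕ, ‖(q:ℂ)^n * z‖ < 1 := by
    intro n
    rw [norm_mul, norm_q_pow hq0]
    calc q^n * ‖z‖ ≤ 1 * ‖z‖ :=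
          mul_le_mul_of_nonneg_right (pow_le_one₀ hq0' hq1.le) (norm_nonneg z)
      _ < 1 := by simpa using hz
  -- qbF (q^n z) → 1
  have hb : ∀ n : ℕ, ‖qbF (q:ℂ) a ((q:ℂ)^n * z) - 1‖ ≤ (M * ‖z‖ * (1-‖z‖)⁻¹) * q^n := by
    intro n
    refine (qbF_sub_one hq0 hq1 a M hM _ (hzn n)).trans ?_
    rw [norm_mul, norm_q_pow hq0]
    have hp1 : q^n ≤ 1 := pow_le_one₀ hq0' hq1.le
    have hp0 : (0:ℝ) ≤ q^n := pow_nonneg hq0' n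
    have h3 : q^n * ‖z‖ ≤ ‖z‖ := by nlinarith [norm_nonneg z]
    have h2 : (1 - q^n*‖z‖)⁻¹ ≤ (1-‖z‖)⁻¹ := by
      apply inv_anti₀ (by linarith) (by linarith)
    have h4 : (0:ℝ) ≤ M * (q^n * ‖z‖) := by positivity
    calc M * (q^n * ‖z‖) * (1 - q^n*‖z‖)⁻¹ ≤ M * (q^n * ‖z‖) * (1-‖z‖)⁻¹ :=
          mul_le_mul_of_nonneg_left h2 h4
      _ = (M * ‖z‖ * (1-‖z‖)⁻¹) * q^n := by ring
  have hTf : Tendsto (fun n : ℕ => qbF (q:ℂ) a ((q:ℂ)^n * z)) atTop (𝓝 1) := by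
    rw [tendsto_iff_norm_sub_tendsto_zero]
    apply squeeze_zero (fun n => norm_nonneg _) hb
    simpa using (tendsto_pow_atTop_nhds_zero_of_lt_one hq0' hq1).const_mul
      (M * ‖z‖ * (1-‖z‖)⁻¹)
  have T1 : Tendsto (fun n : ℕ => qPoch (q:ℂ) z n * qbF (q:ℂ) a z) atTop
      (𝓝 (qPochInf q z * qbF (q:ℂ) a z)) := (tendsto_qPoch hq0 hq1 z).mul_const _
  have T2 : Tendsto (fun n : ℕ => qPoch (q:ℂ) (a*z) n * qbF (q:ℂ) a ((q:ℂ)^n * z)) atTop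
      (𝓝 (qPochInf q (a*z) * 1)) := (tendsto_qPoch hq0 hq1 (a*z)).mul hTf
  have T1' : Tendsto (fun n : ℕ => qPoch (q:ℂ) z n * qbF (q:ℂ) a z) atTop
      (𝓝 (qPochInf q (a*z) * 1)) := by
    apply T2.congr
    intro n
    exact (qbF_iter hq0 hq1 a z hz n).symm
  have hkey : qPochInf q z * qbF (q:ℂ) a z = qPochInf q (a*z) * 1 :=
    tendsto_nhds_unique T1 T1'
  have : qbF (q:ℂ) a z = qPochInf q (a * z) / qPochInf q z := by
    field_simp
    linear_combination hkey
  exact this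
end

section
/- (Euler's integral representation) For Re c > Re a > 0 (with appropriate branch conventions) and |z| < 1, F(a,b,c;z) = (Γ(c)/(Γ(a)Γ(c-a))) ∫_0^1 t^{a-1}(1-t)^{c-a-1}(1-zt)^{-b} dt, where F is the Gauss hypergeometric series. -/
open Filter Finset

lemma summable_master (β : ℝ) (hβ : 0 ≤ β) {r : ℝ} (hr0 : 0 < r) (hr1 : r < 1) :
    Summable (fun k : ℕ =>
      ((k : ℝ) + 1) * ((∏ l ∈ Finset.range k, (β + 1 + l)) / k.factorial) * r ^ k) := by
  set f : ℕ → ℝ := fun k =>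
    ((k : ℝ) + 1) * ((∏ l ∈ Finset.range k, (β + 1 + l)) / k.factorial) * r ^ k with hf
  have hP : ∀ k : ℕ, 0 < ∏ l ∈ Finset.range k, (β + 1 + (l : ℝ)) := fun k =>
    Finset.prod_pos fun l _ => by positivity
  have hfac : ∀ k : ℕ, (0 : ℝ) < k.factorial := fun k => Nat.cast_pos.2 k.factorial_pos
  have hfpos : ∀ k, 0 < f k := fun k => by
    have h1 := hP k
    have h2 := hfac k
    have : (0:ℝ) < (k:ℝ) + 1 := by positivity
    rw [hf]
    positivity
  have hratio : ∀ k : ℕ, f (k + 1) / f k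
      = (1 + 1 / ((k : ℝ) + 1)) * (1 + β * (1 / ((k : ℝ) + 1))) * r := by
    intro k
    have h1 := hP k
    have h2 := hfac k
    have hk : ((k : ℝ) + 1) ≠ 0 := by positivity
    have hr : r ≠ 0 := ne_of_gt hr0
    rw [hf]
    simp only [Finset.prod_range_succ, Nat.factorial_succ, Nat.cast_mul, Nat.cast_add,
      Nat.cast_one, pow_succ]
    field_simp
    ring
  have htend : Filter.Tendsto (fun k : ℕ => ‖f (k + 1)‖ / ‖f k‖) Filter.atTop (nhds r) := by
    have heq : (fun k : ℕ => ‖f (k + 1)‖ / ‖f k‖)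
        = fun k : ℕ => (1 + 1 / ((k : ℝ) + 1)) * (1 + β * (1 / ((k : ℝ) + 1))) * r := by
      funext k
      rw [Real.norm_eq_abs, Real.norm_eq_abs, abs_of_pos (hfpos _), abs_of_pos (hfpos _),
        hratio]
    rw [heq]
    have h0 : Filter.Tendsto (fun k : ℕ => 1 / ((k : ℝ) + 1)) Filter.atTop (nhds 0) :=
      tendsto_one_div_add_atTop_nhds_zero_nat
    have : Filter.Tendsto
        (fun k : ℕ => (1 + 1 / ((k : ℝ) + 1)) * (1 + β * (1 / ((k : ℝ) + 1))) * r)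
        Filter.atTop (nhds ((1 + 0) * (1 + β * 0) * r)) := by
      exact (((tendsto_const_nhds.add h0).mul
        (tendsto_const_nhds.add (tendsto_const_nhds.mul h0))).mul tendsto_const_nhds)
    simpa using this
  exact summable_of_ratio_test_tendsto_lt_one hr1
    (Filter.Eventually.of_forall fun k => ne_of_gt (hfpos k)) htend


noncomputable def risingPoch (a : ℂ) (k : ℕ) : ℂ := ∏ l ∈ Finset.range k, (a + l)

lemma risingPoch_zero (a : ℂ) : risingPoch a 0 = 1 := by simp [risingPoch]

lemma risingPoch_succ (a : ℂ) (k : ℕ) :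
    risingPoch a (k + 1) = risingPoch a k * (a + k) := by
  simp [risingPoch, Finset.prod_range_succ]

lemma norm_risingPoch_le (b : ℂ) (k : ℕ) :
    ‖risingPoch b k‖ ≤ ∏ l ∈ Finset.range k, (‖b‖ + 1 + l) := by
  rw [risingPoch]
  refine (Finset.norm_prod_le _ _).trans ?_
  refine Finset.prod_le_prod (fun l _ => norm_nonneg _) fun l _ => ?_
  calc ‖b + (l:ℂ)‖ ≤ ‖b‖ + ‖(l:ℂ)‖ := norm_add_le _ _
    _ ≤ ‖b‖ + 1 + l := by rw [Complex.norm_natCast]; linarith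

section binom
variable (b : ℂ)

/-- master bound sequence -/
noncomputable def eB (b : ℂ) (k : ℕ) : ℝ :=
  (∏ l ∈ Finset.range k, (‖b‖ + 1 + l)) / k.factorial

lemma eB_pos (k : ℕ) : 0 < eB b k := by
  have h1 : 0 < ∏ l ∈ Finset.range k, (‖b‖ + 1 + (l:ℝ)) :=
    Finset.prod_pos fun l _ => by positivity
  have h2 : (0:ℝ) < k.factorial := Nat.cast_pos.2 k.factorial_pos
  exact div_pos h1 h2

lemma norm_coeff_le (k : ℕ) : ‖risingPoch b k / k.factorial‖ ≤ eB b k := by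
  rw [norm_div, Complex.norm_natCast, eB]
  have h2 : (0:ℝ) < k.factorial := Nat.cast_pos.2 k.factorial_pos
  gcongr
  exact norm_risingPoch_le b k
end binom

lemma hasSum_binomial (b : ℂ) {w : ℂ} (hw : ‖w‖ < 1) :
    HasSum (fun k : ℕ => risingPoch b k / k.factorial * w ^ k) ((1 - w) ^ (-b)) := by
  set cf : ℕ → ℂ := fun k => risingPoch b k / k.factorial with hcf
  set r : ℝ := (‖w‖ + 1) / 2 with hr
  have hw0 : 0 ≤ ‖w‖ := norm_nonneg w
  have hr0 : 0 < r := by rw [hr]; linarith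
  have hr1 : r < 1 := by rw [hr]; linarith
  have hwr : ‖w‖ < r := by rw [hr]; linarith
  have hmaster : Summable (fun k : ℕ => ((k : ℝ) + 1) * eB b k * r ^ k) := by
    have := summable_master ‖b‖ (norm_nonneg b) hr0 hr1
    simpa [eB, mul_div_assoc] using this
  have hsum : ∀ y : ℂ, ‖y‖ ≤ r → Summable fun k => cf k * y ^ k := by
    intro y hy
    refine Summable.of_norm (Summable.of_nonneg_of_le (fun k => norm_nonneg _)
      (fun k => ?_) hmaster)
    rw [norm_mul, norm_pow]
    have h1 : ‖cf k‖ * ‖y‖ ^ k ≤ eB b k * r ^ k :=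
      mul_le_mul (norm_coeff_le b k) (pow_le_pow_left₀ (norm_nonneg y) hy k)
        (by positivity) (eB_pos b k).le
    refine h1.trans ?_
    have h2 : (1 : ℝ) ≤ (k : ℝ) + 1 := by
      have : (0:ℝ) ≤ (k:ℝ) := Nat.cast_nonneg k
      linarith
    have h3 : 0 ≤ eB b k * r ^ k :=
      mul_nonneg (eB_pos b k).le (pow_nonneg hr0.le k)
    nlinarith
  have hu2 : Summable fun k : ℕ => 1 / r * (((k : ℝ) + 1) * eB b k * r ^ k) :=
    hmaster.mul_left _
  have hbound : ∀ (k : ℕ) (y : ℂ), ‖y‖ ≤ r →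
      ‖cf k * ((k : ℂ) * y ^ (k - 1))‖ ≤ 1 / r * (((k : ℝ) + 1) * eB b k * r ^ k) := by
    intro k y hy
    cases k with
    | zero =>
      simp only [Nat.cast_zero, zero_mul, mul_zero, norm_zero]
      have := eB_pos b 0
      positivity
    | succ n =>
      rw [norm_mul, norm_mul, Complex.norm_natCast, norm_pow, Nat.add_sub_cancel]
      have h1 : ‖cf (n + 1)‖ ≤ eB b (n + 1) := norm_coeff_le b (n + 1)
      have h2 : ‖y‖ ^ n ≤ r ^ n := pow_le_pow_left₀ (norm_nonneg y) hy n
      have heq : 1 / r * ((((n + 1 : ℕ) : ℝ) + 1) * eB b (n + 1) * r ^ (n + 1))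
          = ((n : ℝ) + 2) * eB b (n + 1) * r ^ n := by
        push_cast
        field_simp
        ring
      rw [heq]
      push_cast
      have he := eB_pos b (n + 1)
      nlinarith [norm_nonneg (cf (n + 1)), pow_nonneg (norm_nonneg y) n,
        pow_nonneg hr0.le n, mul_le_mul h1 h2 (pow_nonneg (norm_nonneg y) n) he.le]
  set S : ℂ → ℂ := fun y => ∑' k, cf k * y ^ k with hS
  set T : ℂ → ℂ := fun y => ∑' k, cf k * ((k : ℂ) * y ^ (k - 1)) with hT
  have hderivS : ∀ y ∈ Metric.ball (0 : ℂ) r, HasDerivAt S (T y) y := by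
    intro y hy
    exact hasDerivAt_tsum_of_isPreconnected hu2 Metric.isOpen_ball
      (convex_ball (0 : ℂ) r).isPreconnected
      (fun k x _ => (hasDerivAt_pow k x).const_mul (cf k))
      (fun k x hx => hbound k x (by rw [mem_ball_zero_iff] at hx; exact hx.le))
      (Metric.mem_ball_self hr0) (hsum 0 (by simp [hr0.le])) hy
  have hfact : ∀ k : ℕ, ((k.factorial : ℂ)) ≠ 0 :=
    fun k => Nat.cast_ne_zero.2 k.factorial_ne_zero
  set d : ℕ → ℂ := fun k => risingPoch b (k + 1) / k.factorial with hd
  have hdc : ∀ k : ℕ, cf (k + 1) * ((k + 1 : ℕ) : ℂ) = d k := by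
    intro k
    have h1 := hfact k
    have h2 : (((k + 1 : ℕ)) : ℂ) ≠ 0 := Nat.cast_ne_zero.2 (Nat.succ_ne_zero k)
    simp only [hcf, hd, Nat.factorial_succ, Nat.cast_mul]
    rw [div_mul_eq_mul_div, div_eq_div_iff (mul_ne_zero h2 h1) h1]
    ring
  have hODE : ∀ y : ℂ, ‖y‖ < r → (1 - y) * T y = b * S y := by
    intro y hy
    have hTsummable : Summable fun k => cf k * ((k : ℂ) * y ^ (k - 1)) :=
      Summable.of_norm (Summable.of_nonneg_of_le (fun k => norm_nonneg _)
        (fun k => hbound k y hy.le) hu2)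
    have hterm : ∀ k : ℕ, cf (k + 1) * (((k + 1 : ℕ) : ℂ) * y ^ (k + 1 - 1)) = d k * y ^ k := by
      intro k
      rw [Nat.add_sub_cancel, ← hdc k]
      ring
    have hTd : T y = ∑' k, d k * y ^ k := by
      simp only [hT]
      rw [hTsummable.tsum_eq_zero_add]
      simp only [Nat.cast_zero, zero_mul, mul_zero, zero_add]
      exact tsum_congr hterm
    have hSd : Summable fun k => d k * y ^ k :=
      (((summable_nat_add_iff (f := fun k => cf k * ((k : ℂ) * y ^ (k - 1))) 1).mpr hTsummable).congr hterm)
    have hyT : y * T y = ∑' k, d k * y ^ (k + 1) := by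
      rw [hTd, ← tsum_mul_left]
      exact tsum_congr fun k => by ring
    have hTd2 : T y = d 0 + ∑' k, d (k + 1) * y ^ (k + 1) := by
      rw [hTd, hSd.tsum_eq_zero_add, pow_zero, mul_one]
    have hshift : Summable fun k => d (k + 1) * y ^ (k + 1) :=
      (summable_nat_add_iff (f := fun k => d k * y ^ k) 1).mpr hSd
    have hshift2 : Summable fun k => d k * y ^ (k + 1) :=
      (hSd.mul_left y).congr fun k => by ring
    have key : ∀ k : ℕ, d (k + 1) - d k = b * cf (k + 1) := by
      intro k
      have h1 := hfact k
      have h2 : (((k + 1 : ℕ)) : ℂ) ≠ 0 := Nat.cast_ne_zero.2 (Nat.succ_ne_zero k)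
      have hD : (((k + 1 : ℕ)) : ℂ) * k.factorial ≠ 0 := mul_ne_zero h2 h1
      simp only [hd, hcf]
      rw [risingPoch_succ b (k + 1), Nat.factorial_succ k, Nat.cast_mul,
        div_sub_div _ _ hD h1, ← mul_div_assoc, div_eq_div_iff (mul_ne_zero hD h1) hD]
      push_cast
      ring
    have hbS : b * S y = b * cf 0 + ∑' k, b * (cf (k + 1) * y ^ (k + 1)) := by
      simp only [hS]
      rw [(hsum y hy.le).tsum_eq_zero_add, mul_add, ← tsum_mul_left, pow_zero, mul_one]
    calc (1 - y) * T y = T y - y * T y := by ring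
      _ = (d 0 + ∑' k, d (k + 1) * y ^ (k + 1)) - ∑' k, d k * y ^ (k + 1) := by
          rw [← hTd2, ← hyT]
      _ = d 0 + ∑' k, (d (k + 1) * y ^ (k + 1) - d k * y ^ (k + 1)) := by
          rw [hshift.tsum_sub hshift2]; ring
      _ = b * cf 0 + ∑' k, b * (cf (k + 1) * y ^ (k + 1)) := by
          congr 1
          · simp [hd, hcf, risingPoch_succ, risingPoch_zero]
          · exact tsum_congr fun k => by linear_combination y ^ (k + 1) * key k
      _ = b * S y := hbS.symm
  have hd0 : ∀ y ∈ Metric.ball (0 : ℂ) r, HasDerivAt (fun y => (1 - y) ^ b * S y) 0 y := by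
    intro y hy
    rw [mem_ball_zero_iff] at hy
    have hyre : y.re ≤ ‖y‖ := Complex.re_le_norm y
    have hre : 0 < ((1 : ℂ) - y).re := by
      simp only [Complex.sub_re, Complex.one_re]
      linarith
    have h1 : HasDerivAt (fun y : ℂ => (1 - y) ^ b) (b * (1 - y) ^ (b - 1) * (-1)) y := by
      have hid : HasDerivAt (fun y : ℂ => 1 - y) (-1) y := by
        simpa using (hasDerivAt_id y).const_sub 1
      exact hid.cpow_const (Or.inl hre)
    have h2 := hderivS y (mem_ball_zero_iff.mpr hy)
    have h3 := h1.mul h2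
    have hne : (1 : ℂ) - y ≠ 0 := by
      intro h
      rw [h] at hre
      simp at hre
    have hsplit : ((1 : ℂ) - y) ^ b = (1 - y) ^ (b - 1) * (1 - y) := by
      conv_lhs => rw [show b = b - 1 + 1 by ring]
      rw [Complex.cpow_add _ _ hne, Complex.cpow_one]
    refine h3.congr_deriv ?_
    rw [hsplit]
    linear_combination (((1 : ℂ) - y) ^ (b - 1)) * hODE y hy
  have hconst : ∀ y : ℂ, ‖y‖ < r → (1 - y) ^ b * S y = 1 := by
    intro y hy
    have hmem : y ∈ Metric.ball (0 : ℂ) r := mem_ball_zero_iff.mpr hy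
    have h0mem : (0 : ℂ) ∈ Metric.ball (0 : ℂ) r := Metric.mem_ball_self hr0
    have hdiff : DifferentiableOn ℂ (fun y => (1 - y) ^ b * S y) (Metric.ball (0 : ℂ) r) :=
      fun x hx => (hd0 x hx).differentiableAt.differentiableWithinAt
    have hfzero : ∀ x ∈ Metric.ball (0 : ℂ) r,
        fderivWithin ℂ (fun y => (1 - y) ^ b * S y) (Metric.ball (0 : ℂ) r) x = 0 := by
      intro x hx
      rw [fderivWithin_of_isOpen Metric.isOpen_ball hx]
      have h0 : HasFDerivAt (fun y => (1 - y) ^ b * S y) (0 : ℂ →L[ℂ] ℂ) x := by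
        have := (hd0 x hx).hasFDerivAt
        simpa using this
      exact h0.fderiv
    have hval := (convex_ball (0 : ℂ) r).is_const_of_fderivWithin_eq_zero hdiff hfzero hmem h0mem
    rw [hval]
    have hS0 : S 0 = 1 := by
      simp only [hS]
      rw [tsum_eq_single 0 (fun k hk => by simp [zero_pow hk])]
      simp [hcf, risingPoch_zero]
    rw [hS0, mul_one]
    simp [Complex.one_cpow]
  have h1 := hconst w hwr
  have hwre : w.re ≤ ‖w‖ := Complex.re_le_norm w
  have hne : ((1 : ℂ) - w) ^ b ≠ 0 := by
    rw [Ne, Complex.cpow_eq_zero_iff]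
    push_neg
    intro h
    exfalso
    have : ((1 : ℂ) - w).re = 0 := by rw [h]; simp
    simp only [Complex.sub_re, Complex.one_re] at this
    linarith
  have hSw : S w = (1 - w) ^ (-b) := by
    rw [Complex.cpow_neg]
    exact eq_inv_of_mul_eq_one_left (by rw [mul_comm] at h1; exact h1)
  have h2 := (hsum w hwr.le).hasSum
  have h3 : S w = ∑' k, cf k * w ^ k := rfl
  rw [← h3, hSw] at h2
  exact h2

lemma risingPoch_ne_zero {a : ℂ} (ha : 0 < a.re) (k : ℕ) : risingPoch a k ≠ 0 := by
  refine Finset.prod_ne_zero_iff.2 fun l _ => ?_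
  intro h
  have h2 : (a + l).re = 0 := by rw [h]; simp
  simp only [Complex.add_re, Complex.natCast_re] at h2
  have : (0:ℝ) ≤ (l : ℝ) := Nat.cast_nonneg l
  linarith

lemma Gamma_add_nat {a : ℂ} (ha : 0 < a.re) (k : ℕ) :
    Complex.Gamma (a + k) = risingPoch a k * Complex.Gamma a := by
  induction k with
  | zero => simp [risingPoch_zero]
  | succ n ih =>
    have hne : a + n ≠ 0 := by
      intro h
      have h2 : (a + n).re = 0 := by rw [h]; simp
      simp only [Complex.add_re, Complex.natCast_re] at h2
      have : (0:ℝ) ≤ (n : ℝ) := Nat.cast_nonneg n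
      linarith
    have he : a + ((n + 1 : ℕ) : ℂ) = (a + n) + 1 := by push_cast; ring
    rw [he, Complex.Gamma_add_one _ hne, ih, risingPoch_succ]
    ring

lemma summable_coeff (b : ℂ) {ρ : ℝ} (h1 : |ρ| < 1) :
    Summable fun k : ℕ => ‖risingPoch b k / k.factorial‖ * ρ ^ k := by
  refine Summable.of_norm ?_
  have habs : ∀ k : ℕ, ‖‖risingPoch b k / k.factorial‖ * ρ ^ k‖
      = ‖risingPoch b k / k.factorial‖ * |ρ| ^ k := by
    intro k
    rw [norm_mul, norm_norm, norm_pow, Real.norm_eq_abs]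
  simp only [habs]
  have hρ : 0 ≤ |ρ| := abs_nonneg ρ
  set r : ℝ := (|ρ| + 1) / 2 with hr
  have hr0 : 0 < r := by rw [hr]; linarith
  have hr1 : r < 1 := by rw [hr]; linarith
  have hρr : |ρ| ≤ r := by rw [hr]; linarith
  have hmaster : Summable fun k : ℕ => ((k : ℝ) + 1) * eB b k * r ^ k := by
    have := summable_master ‖b‖ (norm_nonneg b) hr0 hr1
    simpa [eB, mul_div_assoc] using this
  refine Summable.of_nonneg_of_le (fun k => by positivity) (fun k => ?_) hmaster
  have h2 : ‖risingPoch b k / k.factorial‖ * |ρ| ^ k ≤ eB b k * r ^ k :=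
    mul_le_mul (norm_coeff_le b k) (pow_le_pow_left₀ hρ hρr k)
      (pow_nonneg hρ k) (eB_pos b k).le
  refine h2.trans ?_
  have h3 : (1 : ℝ) ≤ (k : ℝ) + 1 := by
    have : (0:ℝ) ≤ (k:ℝ) := Nat.cast_nonneg k
    linarith
  nlinarith [mul_nonneg (eB_pos b k).le (pow_nonneg hr0.le k)]

open MeasureTheory in
/-- Euler's integral representation of the Gauss hypergeometric function:
for `Re c > Re a > 0` and `|z| < 1`,
`F(a,b,c;z) = (Γ(c)/(Γ(a)Γ(c-a))) ∫_0^1 t^{a-1}(1-t)^{c-a-1}(1-zt)^{-b} dt`. -/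
theorem euler_integral_representation (a b c z : ℂ)
    (ha : 0 < a.re) (hca : a.re < c.re) (hz : ‖z‖ < 1) :
    ∑' k : ℕ, risingPoch a k * risingPoch b k /
        (risingPoch c k * (Nat.factorial k : ℂ)) * z ^ k
      = Complex.Gamma c / (Complex.Gamma a * Complex.Gamma (c - a)) *
        ∫ t in (0 : ℝ)..1,
          (t : ℂ) ^ (a - 1) * ((1 : ℂ) - t) ^ (c - a - 1) * (1 - z * t) ^ (-b) := by
  have hc : 0 < c.re := lt_trans ha hca
  have hca' : 0 < (c - a).re := by
    rw [Complex.sub_re]; linarith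
  set cf : ℕ → ℂ := fun k => risingPoch b k / k.factorial with hcf
  set μ := MeasureTheory.volume.restrict (Set.Ioc (0:ℝ) 1) with hμ
  set G : ℕ → ℝ → ℂ := fun k t =>
    cf k * z ^ k * ((t:ℂ) ^ (a + k - 1) * ((1:ℂ) - t) ^ (c - a - 1)) with hG
  have hak : ∀ k : ℕ, 0 < (a + (k:ℂ)).re := by
    intro k
    rw [Complex.add_re, Complex.natCast_re]
    have : (0:ℝ) ≤ (k:ℝ) := Nat.cast_nonneg k
    linarith
  have hck : ∀ k : ℕ, 0 < (c + (k:ℂ)).re := by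
    intro k
    rw [Complex.add_re, Complex.natCast_re]
    have : (0:ℝ) ≤ (k:ℝ) := Nat.cast_nonneg k
    linarith
  have hbeta : ∀ k : ℕ, MeasureTheory.IntegrableOn
      (fun t : ℝ => (t:ℂ) ^ (a + (k:ℂ) - 1) * ((1:ℂ) - t) ^ (c - a - 1))
      (Set.Ioc (0:ℝ) 1) := by
    intro k
    have := Complex.betaIntegral_convergent (hak k) hca'
    rwa [intervalIntegrable_iff_integrableOn_Ioc_of_le zero_le_one] at this
  have hGint : ∀ k, MeasureTheory.Integrable (G k) μ := fun k => ((hbeta k).const_mul _)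
  have hbase : MeasureTheory.IntegrableOn
      (fun t : ℝ => (t:ℂ) ^ (a - 1) * ((1:ℂ) - t) ^ (c - a - 1)) (Set.Ioc (0:ℝ) 1) := by
    have := Complex.betaIntegral_convergent ha hca'
    rwa [intervalIntegrable_iff_integrableOn_Ioc_of_le zero_le_one] at this
  set M : ℝ → ℝ := fun t => ‖(t:ℂ) ^ (a - 1) * ((1:ℂ) - t) ^ (c - a - 1)‖ with hM
  have hMint : MeasureTheory.Integrable M μ := hbase.norm
  -- pointwise split of G
  have hsplit : ∀ k : ℕ, ∀ t ∈ Set.Ioc (0:ℝ) 1,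
      G k t = (t:ℂ) ^ (a - 1) * ((1:ℂ) - t) ^ (c - a - 1) * (cf k * (z * t) ^ k) := by
    intro k t ht
    have htne : (t:ℂ) ≠ 0 := by
      exact_mod_cast ne_of_gt ht.1
    simp only [hG]
    rw [show a + (k:ℂ) - 1 = (a - 1) + k by ring, Complex.cpow_add _ _ htne,
      Complex.cpow_natCast, mul_pow]
    ring
  -- norm bound
  have hnormle : ∀ k : ℕ, ∀ t ∈ Set.Ioc (0:ℝ) 1,
      ‖G k t‖ ≤ ‖cf k‖ * ‖z‖ ^ k * M t := by
    intro k t ht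
    rw [hsplit k t ht]
    rw [norm_mul, norm_mul, norm_mul, norm_pow, norm_mul]
    have h1 : ‖(t:ℂ)‖ ≤ 1 := by
      rw [Complex.norm_real, Real.norm_eq_abs, abs_of_pos ht.1]
      exact ht.2
    have h2 : (‖z‖ * ‖(t:ℂ)‖) ^ k ≤ ‖z‖ ^ k := by
      refine pow_le_pow_left₀ (by positivity) ?_ k
      nlinarith [norm_nonneg z]
    have h3 : 0 ≤ ‖(t:ℂ) ^ (a-1)‖ * ‖((1:ℂ) - t) ^ (c - a - 1)‖ := by positivity
    have h4 : ‖cf k‖ * (‖z‖ * ‖(t:ℂ)‖) ^ k ≤ ‖cf k‖ * ‖z‖ ^ k :=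
      mul_le_mul_of_nonneg_left h2 (norm_nonneg _)
    calc ‖(t:ℂ)^(a-1)‖ * ‖((1:ℂ)-t)^(c-a-1)‖ * (‖cf k‖ * (‖z‖ * ‖(t:ℂ)‖) ^ k)
        ≤ ‖(t:ℂ)^(a-1)‖ * ‖((1:ℂ)-t)^(c-a-1)‖ * (‖cf k‖ * ‖z‖ ^ k) :=
          mul_le_mul_of_nonneg_left h4 h3
      _ = ‖cf k‖ * ‖z‖ ^ k * M t := by simp only [hM, norm_mul]; ring
  have hnormint : ∀ k : ℕ, (∫ t, ‖G k t‖ ∂μ) ≤ ‖cf k‖ * ‖z‖ ^ k * ∫ t, M t ∂μ := by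
    intro k
    rw [← MeasureTheory.integral_const_mul]
    refine MeasureTheory.integral_mono_ae (hGint k).norm
      ((hMint.const_mul _)) ?_
    exact (MeasureTheory.ae_restrict_iff' measurableSet_Ioc).2
      (MeasureTheory.ae_of_all _ fun t ht => hnormle k t ht)
  have hsumint : Summable fun k => ∫ t, ‖G k t‖ ∂μ := by
    refine Summable.of_nonneg_of_le
      (fun k => MeasureTheory.integral_nonneg fun t => norm_nonneg _)
      (fun k => hnormint k) ?_
    have : |‖z‖| < 1 := by rwa [abs_of_nonneg (norm_nonneg z)]
    exact (summable_coeff b this).mul_right _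
  have hhs := MeasureTheory.hasSum_integral_of_summable_integral_norm hGint hsumint
  -- identify the integral of the sum
  have hae : ∀ᵐ t ∂μ, (∑' k, G k t)
      = (t:ℂ) ^ (a - 1) * ((1:ℂ) - t) ^ (c - a - 1) * (1 - z * t) ^ (-b) := by
    rw [hμ]
    rw [MeasureTheory.ae_restrict_iff' measurableSet_Ioc]
    refine MeasureTheory.ae_of_all _ fun t ht => ?_
    have hzt : ‖z * (t:ℂ)‖ < 1 := by
      rw [norm_mul, Complex.norm_real, Real.norm_eq_abs, abs_of_pos ht.1]
      nlinarith [norm_nonneg z, ht.2, ht.1]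
    have hbin := (hasSum_binomial b hzt).tsum_eq
    rw [tsum_congr (fun k => hsplit k t ht), tsum_mul_left, hbin]
  have hInt : (∫ t, (∑' k, G k t) ∂μ)
      = ∫ t in (0:ℝ)..1,
          (t : ℂ) ^ (a - 1) * ((1 : ℂ) - t) ^ (c - a - 1) * (1 - z * t) ^ (-b) := by
    rw [intervalIntegral.integral_of_le zero_le_one]
    exact MeasureTheory.integral_congr_ae hae
  have hval : ∀ k, (∫ t, G k t ∂μ)
      = cf k * z ^ k * Complex.betaIntegral (a + k) (c - a) := by
    intro k
    simp only [hG]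
    rw [MeasureTheory.integral_const_mul]
    congr 1
    rw [Complex.betaIntegral, intervalIntegral.integral_of_le zero_le_one]
  have hBk : ∀ k : ℕ, Complex.betaIntegral (a + k) (c - a)
      = Complex.Gamma (a + k) * Complex.Gamma (c - a) / Complex.Gamma (c + k) := by
    intro k
    have hgg := Complex.Gamma_mul_Gamma_eq_betaIntegral (hak k) hca'
    have h2 : a + (k:ℂ) + (c - a) = c + k := by ring
    rw [h2] at hgg
    have h3 : Complex.Gamma (c + k) ≠ 0 := Complex.Gamma_ne_zero_of_re_pos (hck k)
    rw [eq_div_iff h3, hgg]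
    ring
  -- termwise identification
  have hGa : Complex.Gamma a ≠ 0 := Complex.Gamma_ne_zero_of_re_pos ha
  have hGc : Complex.Gamma c ≠ 0 := Complex.Gamma_ne_zero_of_re_pos hc
  have hGca : Complex.Gamma (c - a) ≠ 0 := Complex.Gamma_ne_zero_of_re_pos hca'
  have hterm : ∀ k : ℕ, Complex.Gamma c / (Complex.Gamma a * Complex.Gamma (c - a)) *
      (cf k * z ^ k * Complex.betaIntegral (a + k) (c - a))
      = risingPoch a k * risingPoch b k / (risingPoch c k * (k.factorial : ℂ)) * z ^ k := by
    intro k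
    rw [hBk k, Gamma_add_nat ha k, Gamma_add_nat hc k]
    simp only [hcf]
    have h1 : risingPoch c k ≠ 0 := risingPoch_ne_zero hc k
    have h2 : ((k.factorial : ℂ)) ≠ 0 := Nat.cast_ne_zero.2 k.factorial_ne_zero
    field_simp
  -- conclusion
  have hhs2 : HasSum (fun k => cf k * z ^ k * Complex.betaIntegral (a + k) (c - a))
      (∫ t in (0:ℝ)..1,
        (t : ℂ) ^ (a - 1) * ((1 : ℂ) - t) ^ (c - a - 1) * (1 - z * t) ^ (-b)) := by
    have := hhs
    simp only [hval] at this
    rwa [hInt] at this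
  rw [← hhs2.tsum_eq, ← tsum_mul_left]
  exact tsum_congr fun k => (hterm k).symm
end
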